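/- For every integer v ≥ 1 and every real x > 0, det J(x) > (2/(v+4)) · (F_{v+4}(x)/F_v(x))^{v-1} · F_{v+2}(x)²/F_v(x)²; in particular det J(x) > 0. -/

import Mathlib

open Real

/-- Chi-squared cumulative distribution function with `ν` degrees of freedom. -/
noncomputable def chiCDF (ν x : ℝ) : ℝ :=
  ((2 : ℝ) ^ (ν / 2) * Real.Gamma (ν / 2))⁻¹ *
    ∫ t in (0 : ℝ)..x, t ^ (ν / 2 - 1) * Real.exp (-t / 2)

/-- The `v×v` matrix `J(x)` with entries
`J_{kj}(x) = (1/2)·[(1 + 2δ_{kj})·F_{v+4}(x)/F_v(x) − F_{v+2}(x)²/F_v(x)²]`. -/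
noncomputable def Jmat (v : ℕ) (x : ℝ) : Matrix (Fin v) (Fin v) ℝ :=
  Matrix.of fun k j =>
    (1 / 2) * ((1 + 2 * (if k = j then (1 : ℝ) else 0)) * chiCDF (v + 4) x / chiCDF v x
      - (chiCDF (v + 2) x) ^ 2 / (chiCDF v x) ^ 2)

open Real Set MeasureTheory intervalIntegral Matrix

noncomputable def Gf (a x : ℝ) : ℝ := ∫ t in (0:ℝ)..x, t ^ (a-1) * Real.exp (-t/2)

lemma Gf_integrable {a : ℝ} (ha : 0 < a) (y : ℝ) (hy : 0 ≤ y) :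
    IntervalIntegrable (fun t => t ^ (a-1) * Real.exp (-t/2)) volume 0 y := by
  have h1 : IntervalIntegrable (fun t : ℝ => t ^ (a-1)) volume 0 y :=
    intervalIntegral.intervalIntegrable_rpow' (by linarith)
  refine h1.mono_fun ?_ ?_
  · exact Measurable.aestronglyMeasurable (by fun_prop)
  · filter_upwards [MeasureTheory.ae_restrict_mem measurableSet_uIoc] with t ht
    rw [Set.uIoc_of_le hy] at ht
    have ht0 : 0 < t := ht.1
    have hexp : Real.exp (-t/2) ≤ 1 := Real.exp_le_one_iff.mpr (by linarith)
    rw [Real.norm_of_nonneg (by positivity), Real.norm_of_nonneg (by positivity)]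
    nth_rewrite 2 [← mul_one (t ^ (a-1))]
    exact mul_le_mul_of_nonneg_left hexp (Real.rpow_nonneg ht0.le _)

lemma Gf_pos {a : ℝ} (ha : 0 < a) {y : ℝ} (hy : 0 < y) : 0 < Gf a y := by
  apply intervalIntegral.intervalIntegral_pos_of_pos_on (Gf_integrable ha y hy.le) _ hy
  intro t ht
  exact mul_pos (Real.rpow_pos_of_pos ht.1 _) (Real.exp_pos _)

lemma Gf_hasDerivAt {a : ℝ} (ha : 0 < a) {y : ℝ} (hy : 0 < y) :
    HasDerivAt (Gf a) (y ^ (a-1) * Real.exp (-y/2)) y := by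
  apply intervalIntegral.integral_hasDerivAt_right (Gf_integrable ha y hy.le)
  · exact (Measurable.aestronglyMeasurable (by fun_prop)).stronglyMeasurableAtFilter
  · have : ContinuousAt (fun t : ℝ => t ^ (a-1)) y := Real.continuousAt_rpow_const _ _ (Or.inl hy.ne')
    exact this.mul (by fun_prop)

lemma Gf_continuousOn {a : ℝ} (ha : 0 < a) (z : ℝ) (hz : 0 ≤ z) :
    ContinuousOn (Gf a) (Set.Icc 0 z) := by
  have := intervalIntegral.continuousOn_primitive_interval (μ := volume)
    (f := fun t => t ^ (a-1) * Real.exp (-t/2)) (a := 0) (b := z) ?_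
  · rwa [Set.uIcc_of_le hz] at this
  · rw [Set.uIcc_of_le hz]
    exact (intervalIntegrable_iff_integrableOn_Icc_of_le hz).1 (Gf_integrable ha z hz)

lemma Gf_zero (a : ℝ) : Gf a 0 = 0 := intervalIntegral.integral_same

lemma pos_of_deriv_pos {F F' : ℝ → ℝ} {z : ℝ} (hz : 0 < z)
    (hc : ContinuousOn F (Set.Icc 0 z)) (h0 : F 0 = 0)
    (hd : ∀ y ∈ Set.Ioo (0:ℝ) z, HasDerivAt F (F' y) y)
    (hp : ∀ y ∈ Set.Ioo (0:ℝ) z, 0 < F' y) : 0 < F z := by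
  have hm : StrictMonoOn F (Set.Icc 0 z) := by
    apply strictMonoOn_of_deriv_pos (convex_Icc 0 z) hc
    intro y hy
    rw [interior_Icc] at hy
    rw [(hd y hy).deriv]
    exact hp y hy
  have := hm (Set.left_mem_Icc.2 hz.le) (Set.right_mem_Icc.2 hz.le) hz
  rwa [h0] at this

lemma continuous_rpow_const {a : ℝ} (ha : 0 < a) : Continuous fun t : ℝ => t ^ a :=
  continuous_iff_continuousAt.2 fun t => Real.continuousAt_rpow_const t a (Or.inr ha.le)

lemma hasDerivAt_rpowexp {c : ℝ} {y : ℝ} (hy : 0 < y) :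
    HasDerivAt (fun t => t ^ c * Real.exp (-t/2))
      (c * y ^ (c-1) * Real.exp (-y/2) - y ^ c * Real.exp (-y/2) / 2) y := by
  have h1 : HasDerivAt (fun t : ℝ => t ^ c) (c * y ^ (c-1)) y :=
    Real.hasDerivAt_rpow_const (Or.inl hy.ne')
  have h0 : HasDerivAt (fun t : ℝ => -t/2) (-1/2) y := by
    simpa using (hasDerivAt_id y).neg.div_const 2
  have h2 : HasDerivAt (fun t : ℝ => Real.exp (-t/2)) (Real.exp (-y/2) * (-1/2)) y :=
    (Real.hasDerivAt_exp _).comp y h0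
  have := h1.mul h2
  convert this using 1
  · rfl
  · rfl
  · rfl
  ring

noncomputable def Mf (a y : ℝ) : ℝ :=
  a*(a+2) * Gf a y + y^a * Real.exp (-y/2) * (y/2 - (a+2))

noncomputable def Lf (a y : ℝ) : ℝ :=
  a*(a+2) * y * Gf a y - (a+1)^2 * Gf (a+1) y - y^(a+1) * Real.exp (-y/2)

noncomputable def Kf (a y : ℝ) : ℝ :=
  a*(a+2) * (Gf (a+2) y + y^2 * Gf a y) - 2*(a+1)^2 * y * Gf (a+1) y

noncomputable def Hf (a y : ℝ) : ℝ :=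
  a*(a+2) * Gf a y * Gf (a+2) y - (a+1)^2 * (Gf (a+1) y)^2

lemma rpow_fact {a y : ℝ} (hy : 0 < y) :
    y ^ a = y ^ (a-1) * y ∧ y ^ (a+1) = y ^ (a-1) * y * y := by
  have h1 : y ^ a = y ^ (a-1) * y := by
    rw [← Real.rpow_add_one hy.ne' (a-1)]; ring_nf
  have h2 : y ^ (a+1) = y ^ a * y := by
    rw [← Real.rpow_add_one hy.ne' a]
  exact ⟨h1, by rw [h2, h1]⟩

lemma Mf_hasDerivAt {a y : ℝ} (ha : 0 < a) (hy : 0 < y) :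
    HasDerivAt (Mf a) (y ^ (a-1) * Real.exp (-y/2) * (y * (4*a+6-y) / 4)) y := by
  have hG := Gf_hasDerivAt ha hy
  have h2 := (hasDerivAt_rpowexp (c := a) hy).mul
    (((hasDerivAt_id y).div_const 2).sub_const (a+2))
  have h := (hG.const_mul (a*(a+2))).add h2
  convert h using 1
  · rfl
  · rfl
  · rfl
  obtain ⟨e1, e2⟩ := rpow_fact (a := a) hy
  rw [e1]
  simp only [id_eq]
  ring

lemma Lf_hasDerivAt {a y : ℝ} (ha : 0 < a) (hy : 0 < y) :
    HasDerivAt (Lf a) (Mf a y) y := by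
  have hG := Gf_hasDerivAt ha hy
  have hG1 := Gf_hasDerivAt (by linarith : (0:ℝ) < a+1) hy
  have h1 := ((hasDerivAt_id y).mul hG).const_mul (a*(a+2))
  have h2 := hG1.const_mul ((a+1)^2)
  have h3 := hasDerivAt_rpowexp (c := a+1) hy
  have h := (h1.sub h2).sub h3
  convert h using 1
  · rfl
  · rfl
  · funext t
    simp only [Lf, id_eq, Pi.sub_apply, Pi.mul_apply]
    ring
  · obtain ⟨e1, e2⟩ := rpow_fact (a := a) hy
    have e3 : a + 1 - 1 = a := by ring
    simp only [Mf, id_eq]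
    rw [e3, e1, e2]
    ring

lemma Kf_hasDerivAt {a y : ℝ} (ha : 0 < a) (hy : 0 < y) :
    HasDerivAt (Kf a) (2 * Lf a y) y := by
  have hG := Gf_hasDerivAt ha hy
  have hG1 := Gf_hasDerivAt (by linarith : (0:ℝ) < a+1) hy
  have hG2 := Gf_hasDerivAt (by linarith : (0:ℝ) < a+2) hy
  have h1 := (hG2.add (((hasDerivAt_pow 2 y).mul hG))).const_mul (a*(a+2))
  have h2 := ((hasDerivAt_id y).mul hG1).const_mul (2*(a+1)^2)
  have h := h1.sub h2
  convert h using 1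
  · rfl
  · rfl
  · funext t
    simp only [Kf, id_eq, Pi.sub_apply, Pi.mul_apply, Pi.add_apply]
    ring
  · obtain ⟨e1, e2⟩ := rpow_fact (a := a) hy
    have e3 : a + 1 - 1 = a := by ring
    have e4 : a + 2 - 1 = a + 1 := by ring
    rw [e3, e4, e1, e2]
    simp only [Lf, id_eq]
    rw [e2]
    ring

lemma Hf_hasDerivAt {a y : ℝ} (ha : 0 < a) (hy : 0 < y) :
    HasDerivAt (Hf a) (y ^ (a-1) * Real.exp (-y/2) * Kf a y) y := by
  have hG := Gf_hasDerivAt ha hy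
  have hG1 := Gf_hasDerivAt (by linarith : (0:ℝ) < a+1) hy
  have hG2 := Gf_hasDerivAt (by linarith : (0:ℝ) < a+2) hy
  have h1 := ((hG.const_mul (a*(a+2))).mul hG2)
  have h2 := ((hG1.pow 2).const_mul ((a+1)^2))
  have h := h1.sub h2
  convert h using 1
  · rfl
  · rfl
  · rfl
  obtain ⟨e1, e2⟩ := rpow_fact (a := a) hy
  have e3 : a + 1 - 1 = a := by ring
  have e4 : a + 2 - 1 = a + 1 := by ring
  simp only [Kf, pow_one]
  rw [e3, e4, e1, e2]
  norm_num
  ring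

lemma Mf_continuousOn {a : ℝ} (ha : 0 < a) {z : ℝ} (hz : 0 ≤ z) :
    ContinuousOn (Mf a) (Set.Icc 0 z) := by
  have h1 := Gf_continuousOn ha z hz
  have h2 : Continuous fun y : ℝ => y ^ a * Real.exp (-y/2) * (y/2 - (a+2)) :=
    ((continuous_rpow_const ha).mul (by fun_prop)).mul (by fun_prop)
  exact (continuousOn_const.mul h1).add h2.continuousOn

lemma Lf_continuousOn {a : ℝ} (ha : 0 < a) {z : ℝ} (hz : 0 ≤ z) :
    ContinuousOn (Lf a) (Set.Icc 0 z) := by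
  have h1 := Gf_continuousOn ha z hz
  have h1' := Gf_continuousOn (by linarith : (0:ℝ) < a+1) z hz
  have h2 : Continuous fun y : ℝ => y ^ (a+1) * Real.exp (-y/2) :=
    (continuous_rpow_const (by linarith)).mul (by fun_prop)
  exact (((continuousOn_const.mul continuousOn_id).mul h1).sub
    (continuousOn_const.mul h1')).sub h2.continuousOn

lemma Kf_continuousOn {a : ℝ} (ha : 0 < a) {z : ℝ} (hz : 0 ≤ z) :
    ContinuousOn (Kf a) (Set.Icc 0 z) := by
  have h1 := Gf_continuousOn ha z hz
  have h1' := Gf_continuousOn (by linarith : (0:ℝ) < a+1) z hz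
  have h1'' := Gf_continuousOn (by linarith : (0:ℝ) < a+2) z hz
  exact (continuousOn_const.mul (h1''.add ((continuous_pow 2).continuousOn.mul h1))).sub
    ((continuousOn_const.mul continuousOn_id).mul h1')

lemma Hf_continuousOn {a : ℝ} (ha : 0 < a) {z : ℝ} (hz : 0 ≤ z) :
    ContinuousOn (Hf a) (Set.Icc 0 z) := by
  have h1 := Gf_continuousOn ha z hz
  have h1' := Gf_continuousOn (by linarith : (0:ℝ) < a+1) z hz
  have h1'' := Gf_continuousOn (by linarith : (0:ℝ) < a+2) z hz
  exact ((continuousOn_const.mul h1).mul h1'').sub (continuousOn_const.mul (h1'.pow 2))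

lemma Mf_pos {a : ℝ} (ha : 0 < a) {y : ℝ} (hy : 0 < y) : 0 < Mf a y := by
  rcases le_or_gt y (2*a+4) with h | h
  · refine pos_of_deriv_pos hy (Mf_continuousOn ha hy.le) ?_
      (fun t ht => Mf_hasDerivAt ha ht.1) ?_
    · simp [Mf, Gf_zero, Real.zero_rpow ha.ne']
    · intro t ht
      have h1 : 0 < 4*a+6-t := by
        have := ht.2; linarith
      have := mul_pos (Real.rpow_pos_of_pos ht.1 (a-1)) (Real.exp_pos (-t/2))
      have h2 : 0 < t * (4*a+6-t) / 4 := by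
        have := ht.1
        positivity
      exact mul_pos this h2
  · have hg := Gf_pos ha hy
    have h2 : 0 < y/2 - (a+2) := by linarith
    have h3 := mul_pos (mul_pos (Real.rpow_pos_of_pos hy a) (Real.exp_pos (-y/2))) h2
    have h4 := mul_pos (mul_pos ha (by linarith : (0:ℝ) < a+2)) hg
    unfold Mf
    nlinarith

lemma Lf_pos {a : ℝ} (ha : 0 < a) {y : ℝ} (hy : 0 < y) : 0 < Lf a y := by
  refine pos_of_deriv_pos hy (Lf_continuousOn ha hy.le) ?_
    (fun t ht => Lf_hasDerivAt ha ht.1) (fun t ht => Mf_pos ha ht.1)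
  have h0 : (0:ℝ) ^ (a+1) = 0 := Real.zero_rpow (by linarith)
  simp [Lf, Gf_zero, h0]

lemma Kf_pos {a : ℝ} (ha : 0 < a) {y : ℝ} (hy : 0 < y) : 0 < Kf a y := by
  refine pos_of_deriv_pos hy (Kf_continuousOn ha hy.le) ?_
    (fun t ht => Kf_hasDerivAt ha ht.1) (fun t ht => by linarith [Lf_pos ha ht.1])
  simp [Kf, Gf_zero]

lemma Hf_pos {a : ℝ} (ha : 0 < a) {y : ℝ} (hy : 0 < y) : 0 < Hf a y := by
  refine pos_of_deriv_pos hy (Hf_continuousOn ha hy.le) ?_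
    (fun t ht => Hf_hasDerivAt ha ht.1) ?_
  · simp [Hf, Gf_zero]
  · intro t ht
    have := mul_pos (Real.rpow_pos_of_pos ht.1 (a-1)) (Real.exp_pos (-t/2))
    exact mul_pos this (Kf_pos ha ht.1)

lemma key_ineq {a y : ℝ} (ha : 0 < a) (hy : 0 < y) :
    (a+1)^2 * (Gf (a+1) y)^2 < a*(a+2) * Gf a y * Gf (a+2) y := by
  have := Hf_pos ha hy
  unfold Hf at this
  linarith

lemma chiCDF_eq (ν x : ℝ) : chiCDF ν x = ((2:ℝ)^(ν/2) * Real.Gamma (ν/2))⁻¹ * Gf (ν/2) x := rfl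

lemma chiCDF_pos {ν x : ℝ} (hν : 0 < ν) (hx : 0 < x) : 0 < chiCDF ν x := by
  rw [chiCDF_eq]
  have h2 : (0:ℝ) < 2 ^ (ν/2) := Real.rpow_pos_of_pos two_pos _
  have hΓ : 0 < Real.Gamma (ν/2) := Real.Gamma_pos_of_pos (by linarith)
  exact mul_pos (inv_pos.2 (mul_pos h2 hΓ)) (Gf_pos (by linarith) hx)

lemma cdf_key {v : ℕ} (hv : 1 ≤ v) {x : ℝ} (hx : 0 < x) :
    ((v:ℝ)+2)/((v:ℝ)+4) * (chiCDF ((v:ℝ)+2) x)^2 < chiCDF ((v:ℝ)+4) x * chiCDF (v:ℝ) x := by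
  have hv1 : (1:ℝ) ≤ (v:ℝ) := by exact_mod_cast hv
  set a : ℝ := (v:ℝ)/2 with ha_def
  have ha : 0 < a := by rw [ha_def]; linarith
  have e2 : ((v:ℝ)+2)/2 = a+1 := by rw [ha_def]; ring
  have e4 : ((v:ℝ)+4)/2 = a+2 := by rw [ha_def]; ring
  have hΓ : 0 < Real.Gamma a := Real.Gamma_pos_of_pos ha
  have hΓ1 : Real.Gamma (a+1) = a * Real.Gamma a := Real.Gamma_add_one ha.ne'
  have hΓ2 : Real.Gamma (a+2) = (a+1) * (a * Real.Gamma a) := by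
    have e : a+2 = (a+1)+1 := by ring
    rw [e, Real.Gamma_add_one (by linarith), hΓ1]
  have hp1 : (2:ℝ)^(a+1) = 2^a * 2 := Real.rpow_add_one two_ne_zero a
  have hp2 : (2:ℝ)^(a+2) = 2^a * 2 * 2 := by
    have e : a+2 = (a+1)+1 := by ring
    rw [e, Real.rpow_add_one two_ne_zero, hp1]
  have hA : ((v:ℝ)+2) = 2*(a+1) := by rw [ha_def]; ring
  have hB : ((v:ℝ)+4) = 2*(a+2) := by rw [ha_def]; ring
  rw [chiCDF_eq, chiCDF_eq, chiCDF_eq, e2, e4, hΓ1, hΓ2, hp1, hp2, hA, hB]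
  have key := key_ineq ha hx
  have h2a : (0:ℝ) < 2^a := Real.rpow_pos_of_pos two_pos a
  set c := (2:ℝ)^a with hc
  set G := Real.Gamma a with hG
  set g0 := Gf a x
  set g1 := Gf (a+1) x
  set g2 := Gf (a+2) x
  have hc0 : c ≠ 0 := ne_of_gt h2a
  have hG0 : G ≠ 0 := ne_of_gt hΓ
  have ha0 : a ≠ 0 := ha.ne'
  have ha1 : a + 1 ≠ 0 := by positivity
  have ha2 : a + 2 ≠ 0 := by positivity
  have hD : (0:ℝ) < ((4*(a+2)*(a+1)) * (c^2*a^2*G^2))⁻¹ := by positivity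
  have lhs_eq : 2*(a+1)/(2*(a+2)) * ((c*2 * (a*G))⁻¹ * g1)^2
      = ((a+1)^2 * g1^2) * ((4*(a+2)*(a+1)) * (c^2*a^2*G^2))⁻¹ := by
    field_simp
    ring
  have rhs_eq : ((c*2*2 * ((a+1)*(a*G)))⁻¹ * g2) * ((c*G)⁻¹ * g0)
      = (a*(a+2) * g0 * g2) * ((4*(a+2)*(a+1)) * (c^2*a^2*G^2))⁻¹ := by
    field_simp
    ring
  rw [lhs_eq, rhs_eq]
  exact mul_lt_mul_of_pos_right key hD

lemma det_aux {n : ℕ} (hn : 1 ≤ n) (c d : ℝ) (hd : d ≠ 0) :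
    (Matrix.of fun k j : Fin n => c + (if k = j then d else 0)).det
      = d^(n-1) * (d + n*c) := by
  have hM : (Matrix.of fun k j : Fin n => c + (if k = j then d else 0))
      = d • ((1 : Matrix (Fin n) (Fin n) ℝ)
        + Matrix.replicateCol Unit (fun _ : Fin n => c/d) * Matrix.replicateRow Unit (fun _ : Fin n => (1:ℝ))) := by
    ext k j
    simp only [Matrix.of_apply, Matrix.smul_apply, Matrix.add_apply, Matrix.one_apply,
      Matrix.mul_apply, Matrix.replicateCol_apply, Matrix.replicateRow_apply, Finset.univ_unique,
      Finset.sum_singleton, smul_eq_mul, mul_one]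
    by_cases h : k = j <;> simp [h] <;> field_simp <;> ring
  rw [hM, Matrix.det_smul, Matrix.det_one_add_replicateCol_mul_replicateRow]
  have hsum : ((fun _ : Fin n => (1:ℝ)) ⬝ᵥ fun _ => c/d) = n * (c/d) := by
    simp [dotProduct]
  rw [hsum, Fintype.card_fin]
  have hn' : d ^ n = d^(n-1) * d := by
    rw [← pow_succ]
    congr 1
    omega
  rw [hn']
  field_simp

open Real Set MeasureTheory intervalIntegral Matrix in
/-- Lower bound for the determinant of `J(x)`, and its positivity. -/
theorem det_Jmat_lower_bound (v : ℕ) (hv : 1 ≤ v) (x : ℝ) (hx : 0 < x) :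
    (Jmat v x).det > (2 / ((v : ℝ) + 4)) * (chiCDF (v + 4) x / chiCDF v x) ^ (v - 1) *
        ((chiCDF (v + 2) x) ^ 2 / (chiCDF v x) ^ 2)
      ∧ (Jmat v x).det > 0 := by
  have hv0 : (0:ℝ) < (v:ℝ) := by exact_mod_cast Nat.lt_of_lt_of_le Nat.zero_lt_one hv
  have hF0 : 0 < chiCDF (v:ℝ) x := chiCDF_pos hv0 hx
  have hF2 : 0 < chiCDF ((v:ℝ)+2) x := chiCDF_pos (by linarith) hx
  have hF4 : 0 < chiCDF ((v:ℝ)+4) x := chiCDF_pos (by linarith) hx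
  have h0ne : chiCDF (v:ℝ) x ≠ 0 := hF0.ne'
  set A := chiCDF ((v:ℝ)+4) x / chiCDF (v:ℝ) x with hA_def
  set B := (chiCDF ((v:ℝ)+2) x)^2 / (chiCDF (v:ℝ) x)^2 with hB_def
  have hApos : 0 < A := div_pos hF4 hF0
  have hBpos : 0 < B := div_pos (pow_pos hF2 2) (pow_pos hF0 2)
  have hJ : Jmat v x = Matrix.of fun k j : Fin v => (A - B)/2 + (if k = j then A else 0) := by
    ext k j
    simp only [Jmat, Matrix.of_apply]
    by_cases h : k = j <;>
      simp only [h, if_true, if_false] <;> rw [hA_def, hB_def] <;> ring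
  have hdet : (Jmat v x).det = A^(v-1) * (A + v*((A-B)/2)) := by
    rw [hJ, det_aux hv _ _ hApos.ne']
  have key := cdf_key hv hx
  have hstep : ((v:ℝ)+2)/((v:ℝ)+4) * B < A := by
    rw [hA_def, hB_def,
      show chiCDF ((v:ℝ)+4) x / chiCDF (v:ℝ) x
        = (chiCDF ((v:ℝ)+4) x * chiCDF (v:ℝ) x) / (chiCDF (v:ℝ) x)^2 by field_simp,
      show ((v:ℝ)+2)/((v:ℝ)+4) * ((chiCDF ((v:ℝ)+2) x)^2/(chiCDF (v:ℝ) x)^2)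
        = (((v:ℝ)+2)/((v:ℝ)+4) * (chiCDF ((v:ℝ)+2) x)^2)/(chiCDF (v:ℝ) x)^2 by ring]
    exact (div_lt_div_iff_of_pos_right (pow_pos hF0 2)).2 key
  have hmain : 2/((v:ℝ)+4) * B < A + v*((A-B)/2) := by
    have h4 : (0:ℝ) < (v:ℝ)+4 := by linarith
    rw [div_mul_eq_mul_div, div_lt_iff₀ h4]
    rw [div_mul_eq_mul_div, div_lt_iff₀ h4] at hstep
    nlinarith [hstep, hBpos, hv0, hApos]
  have hpow : 0 < A^(v-1) := pow_pos hApos _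
  have goal1 : (Jmat v x).det > 2/((v:ℝ)+4) * A^(v-1) * B := by
    rw [hdet, show 2/((v:ℝ)+4) * A^(v-1) * B = A^(v-1) * (2/((v:ℝ)+4) * B) by ring]
    exact mul_lt_mul_of_pos_left hmain hpow
  have rhspos : 0 < 2/((v:ℝ)+4) * A^(v-1) * B := by
    have h4 : (0:ℝ) < (v:ℝ)+4 := by linarith
    positivity
  exact ⟨goal1, lt_trans rhspos goal1⟩
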